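/- Let L: ℝᵈ → ℝ be differentiable and λ-smooth, let x ∈ ℝᵈ, and let ε ≥ 0. Then the ℓ∞-constrained adversarial loss satisfies |sup_{‖δ‖∞ ≤ ε} L(x + δ) − L(x) − ε‖∇L(x)‖₁| ≤ λ·d·ε²/2. -/

import Mathlib

open InnerProductSpace intervalIntegral

lemma descent {d : ℕ} (L : EuclideanSpace ℝ (Fin d) → ℝ) (lam : ℝ) (hlam : 0 ≤ lam)
    (hdiff : Differentiable ℝ L)
    (hsmooth : ∀ x z : EuclideanSpace ℝ (Fin d),
      ‖gradient L x - gradient L z‖ ≤ lam * ‖x - z‖)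
    (x y : EuclideanSpace ℝ (Fin d)) :
    |L y - L x - ⟪gradient L x, y - x⟫_ℝ| ≤ lam / 2 * ‖y - x‖ ^ 2 := by
  set v := y - x with hv
  have hgradcont : Continuous (gradient L) := by
    refine (LipschitzWith.of_dist_le_mul (K := lam.toNNReal) ?_).continuous
    intro a b
    rw [dist_eq_norm, dist_eq_norm, Real.coe_toNNReal lam hlam]
    exact hsmooth a b
  have hderiv : ∀ t : ℝ, HasDerivAt (fun t : ℝ => L (x + t • v))
      ⟪gradient L (x + t • v), v⟫_ℝ t := by
    intro t
    have h2 : HasDerivAt (fun t : ℝ => x + t • v) v t := by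
      simpa using ((hasDerivAt_id t).smul_const v).const_add x
    have h1 := (hdiff (x + t • v)).hasFDerivAt.comp_hasDerivAt t h2
    have : fderiv ℝ L (x + t • v) v = ⟪gradient L (x + t • v), v⟫_ℝ := by
      rw [gradient, toDual_symm_apply]
    rwa [this] at h1
  have hcont : Continuous fun t : ℝ => ⟪gradient L (x + t • v), v⟫_ℝ := by
    exact (hgradcont.comp (continuous_const.add (continuous_id.smul continuous_const))).inner
      continuous_const
  have hint : L y - L x = ∫ t in (0:ℝ)..1, ⟪gradient L (x + t • v), v⟫_ℝ := by
    have := intervalIntegral.integral_eq_sub_of_hasDerivAt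
      (f := fun t : ℝ => L (x + t • v)) (a := (0:ℝ)) (b := 1)
      (fun t _ => hderiv t) (hcont.intervalIntegrable 0 1)
    simp only [one_smul, zero_smul, add_zero] at this
    rw [this, hv]
    have h3 : x + (y - x) = y := by abel
    rw [h3]
  have key : L y - L x - ⟪gradient L x, v⟫_ℝ
      = ∫ t in (0:ℝ)..1, ⟪gradient L (x + t • v) - gradient L x, v⟫_ℝ := by
    have : ∀ t : ℝ, ⟪gradient L (x + t • v) - gradient L x, v⟫_ℝ
        = ⟪gradient L (x + t • v), v⟫_ℝ - ⟪gradient L x, v⟫_ℝ := fun t => inner_sub_left _ _ _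
    rw [intervalIntegral.integral_congr (g := fun t =>
        ⟪gradient L (x + t • v), v⟫_ℝ - ⟪gradient L x, v⟫_ℝ) (fun t _ => this t),
      intervalIntegral.integral_sub (hcont.intervalIntegrable 0 1)
        (intervalIntegrable_const), intervalIntegral.integral_const, hint]
    simp
  rw [key]
  have hbound : ∀ t ∈ Set.Icc (0:ℝ) 1,
      |⟪gradient L (x + t • v) - gradient L x, v⟫_ℝ| ≤ lam * t * ‖v‖ ^ 2 := by
    intro t ht
    calc |⟪gradient L (x + t • v) - gradient L x, v⟫_ℝ|
        ≤ ‖gradient L (x + t • v) - gradient L x‖ * ‖v‖ := abs_real_inner_le_norm _ _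
      _ ≤ lam * ‖(x + t • v) - x‖ * ‖v‖ :=
          mul_le_mul_of_nonneg_right (hsmooth _ _) (norm_nonneg _)
      _ = lam * t * ‖v‖ ^ 2 := by
          rw [add_sub_cancel_left, norm_smul, Real.norm_eq_abs, abs_of_nonneg ht.1]; ring
  have habs : |∫ t in (0:ℝ)..1, ⟪gradient L (x + t • v) - gradient L x, v⟫_ℝ|
      ≤ ∫ t in (0:ℝ)..1, lam * t * ‖v‖ ^ 2 := by
    have h1 : (fun t : ℝ => ⟪gradient L (x + t • v) - gradient L x, v⟫_ℝ) =
        fun t => ⟪gradient L (x + t • v), v⟫_ℝ - ⟪gradient L x, v⟫_ℝ := by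
      funext t; exact inner_sub_left _ _ _
    have hci : IntervalIntegrable (fun t : ℝ =>
        ⟪gradient L (x + t • v) - gradient L x, v⟫_ℝ) MeasureTheory.volume 0 1 := by
      rw [h1]; exact (hcont.sub continuous_const).intervalIntegrable 0 1
    calc |∫ t in (0:ℝ)..1, ⟪gradient L (x + t • v) - gradient L x, v⟫_ℝ|
        ≤ ∫ t in (0:ℝ)..1, |⟪gradient L (x + t • v) - gradient L x, v⟫_ℝ| :=
          intervalIntegral.abs_integral_le_integral_abs zero_le_one
      _ ≤ ∫ t in (0:ℝ)..1, lam * t * ‖v‖ ^ 2 := by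
          apply intervalIntegral.integral_mono_on zero_le_one hci.abs
            (((continuous_const.mul continuous_id).mul continuous_const).intervalIntegrable 0 1)
          intro t ht; exact hbound t ht
  have : (∫ t in (0:ℝ)..1, lam * t * ‖v‖ ^ 2) = lam / 2 * ‖v‖ ^ 2 := by
    have : (fun t : ℝ => lam * t * ‖v‖ ^ 2) = fun t : ℝ => (lam * ‖v‖ ^ 2) * t := by
      funext t; ring
    rw [this, intervalIntegral.integral_const_mul, integral_id]
    ring
  rw [this] at habs
  exact habs


/-- for a differentiable, λ-smooth `L : ℝᵈ → ℝ`, any `x` and `ε ≥ 0`, the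
ℓ∞-constrained adversarial loss satisfies
`|sup_{‖δ‖∞ ≤ ε} L(x + δ) − L(x) − ε ‖∇L(x)‖₁| ≤ λ d ε² / 2`. -/
theorem stmt_14 {d : ℕ} (L : EuclideanSpace ℝ (Fin d) → ℝ) (lam : ℝ)
    (hdiff : Differentiable ℝ L)
    (hsmooth : ∀ x z : EuclideanSpace ℝ (Fin d),
      ‖gradient L x - gradient L z‖ ≤ lam * ‖x - z‖)
    (x : EuclideanSpace ℝ (Fin d)) (ε : ℝ) (hε : 0 ≤ ε) :
    |(sSup {r : ℝ | ∃ δ : EuclideanSpace ℝ (Fin d), (∀ i, |δ i| ≤ ε) ∧ r = L (x + δ)}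
        - L x - ε * ∑ i, |gradient L x i|)| ≤ lam * d * ε ^ 2 / 2 := by
  by_cases hd : d = 0
  · subst hd
    have hset : {r : ℝ | ∃ δ : EuclideanSpace ℝ (Fin 0), (∀ i, |δ i| ≤ ε) ∧ r = L (x + δ)}
        = {L x} := by
      ext r
      constructor
      · rintro ⟨δ, -, rfl⟩
        have : x + δ = x := Subsingleton.elim _ _
        simp [this]
      · rintro rfl
        exact ⟨0, fun i => i.elim0, by simp⟩
    rw [hset, csSup_singleton]
    simp
  · have hd' : 0 < d := Nat.pos_of_ne_zero hd
    have hlam : 0 ≤ lam := by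
      set u : EuclideanSpace ℝ (Fin d) := EuclideanSpace.single ⟨0, hd'⟩ (1:ℝ) with hu
      have h := hsmooth x (x + u)
      have h1 : x - (x + u) = -u := by abel
      rw [h1, norm_neg, hu, EuclideanSpace.norm_single] at h
      simpa using le_trans (norm_nonneg _) h
    set g := gradient L x with hg
    set S := {r : ℝ | ∃ δ : EuclideanSpace ℝ (Fin d), (∀ i, |δ i| ≤ ε) ∧ r = L (x + δ)} with hS
    set S1 := ∑ i, |g i| with hS1
    set K := lam * d * ε ^ 2 / 2 with hK
    -- inner product formula
    have hinner : ∀ δ : EuclideanSpace ℝ (Fin d), ⟪g, δ⟫_ℝ = ∑ i, g i * δ i := by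
      intro δ
      simp [PiLp.inner_apply, RCLike.inner_apply, mul_comm]
    -- norm-squared bound
    have hnormsq : ∀ δ : EuclideanSpace ℝ (Fin d), (∀ i, |δ i| ≤ ε) → ‖δ‖ ^ 2 ≤ d * ε ^ 2 := by
      intro δ hδ
      have h1 : ‖δ‖ ^ 2 = ∑ i, ‖δ i‖ ^ 2 := by
        rw [EuclideanSpace.norm_eq, Real.sq_sqrt]
        positivity
      rw [h1]
      calc ∑ i, ‖δ i‖ ^ 2 ≤ ∑ _i : Fin d, ε ^ 2 := by
            apply Finset.sum_le_sum
            intro i _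
            rw [Real.norm_eq_abs]
            exact pow_le_pow_left₀ (abs_nonneg _) (hδ i) 2
        _ = d * ε ^ 2 := by simp [Finset.sum_const, nsmul_eq_mul]
    -- descent specialized
    have hdesc : ∀ δ : EuclideanSpace ℝ (Fin d), (∀ i, |δ i| ≤ ε) →
        |L (x + δ) - L x - ⟪g, δ⟫_ℝ| ≤ K := by
      intro δ hδ
      have h := descent L lam hlam hdiff hsmooth x (x + δ)
      rw [add_sub_cancel_left] at h
      refine h.trans ?_
      rw [hK]
      calc lam / 2 * ‖δ‖ ^ 2 ≤ lam / 2 * (d * ε ^ 2) := by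
            apply mul_le_mul_of_nonneg_left (hnormsq δ hδ) (by linarith)
        _ = lam * d * ε ^ 2 / 2 := by ring
    -- inner product bound
    have hib : ∀ δ : EuclideanSpace ℝ (Fin d), (∀ i, |δ i| ≤ ε) → ⟪g, δ⟫_ℝ ≤ ε * S1 := by
      intro δ hδ
      rw [hinner]
      calc ∑ i, g i * δ i ≤ ∑ i, |g i| * ε := by
            apply Finset.sum_le_sum
            intro i _
            calc g i * δ i ≤ |g i * δ i| := le_abs_self _
              _ = |g i| * |δ i| := abs_mul _ _
              _ ≤ |g i| * ε := mul_le_mul_of_nonneg_left (hδ i) (abs_nonneg _)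
        _ = ε * S1 := by rw [hS1, ← Finset.sum_mul, mul_comm]
    -- upper bound for all elements of S
    have hup : ∀ r ∈ S, r ≤ L x + ε * S1 + K := by
      rintro r ⟨δ, hδ, rfl⟩
      have h1 := (abs_le.mp (hdesc δ hδ)).2
      have h2 := hib δ hδ
      linarith
    have hne : S.Nonempty := ⟨L x, 0, fun i => by simpa using hε, by simp⟩
    have hbdd : BddAbove S := ⟨L x + ε * S1 + K, hup⟩
    -- lower bound via the sign vector
    set δs : EuclideanSpace ℝ (Fin d) := WithLp.toLp 2 (fun i => ε * Real.sign (g i)) with hδs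
    have hsign_le : ∀ t : ℝ, |Real.sign t| ≤ 1 := by
      intro t
      rcases lt_trichotomy t 0 with h | h | h
      · rw [Real.sign_of_neg h]; norm_num
      · rw [h, Real.sign_zero]; norm_num
      · rw [Real.sign_of_pos h]; norm_num
    have hsign_mul : ∀ t : ℝ, t * Real.sign t = |t| := by
      intro t
      rcases lt_trichotomy t 0 with h | h | h
      · rw [Real.sign_of_neg h, abs_of_neg h]; ring
      · simp [h]
      · rw [Real.sign_of_pos h, abs_of_pos h]; ring
    have hδsb : ∀ i, |δs i| ≤ ε := by
      intro i
      calc |δs i| = ε * |Real.sign (g i)| := by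
            rw [hδs]; rw [PiLp.toLp_apply, abs_mul, abs_of_nonneg hε]
        _ ≤ ε * 1 := mul_le_mul_of_nonneg_left (hsign_le _) hε
        _ = ε := mul_one ε
    have hδsinner : ⟪g, δs⟫_ℝ = ε * S1 := by
      rw [hinner, hS1, Finset.mul_sum]
      apply Finset.sum_congr rfl
      intro i _
      calc g i * δs i = ε * (g i * Real.sign (g i)) := by rw [hδs, PiLp.toLp_apply]; ring
        _ = ε * |g i| := by rw [hsign_mul]
    have hmem : L (x + δs) ∈ S := ⟨δs, hδsb, rfl⟩
    have hlow : L x + ε * S1 - K ≤ sSup S := by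
      have h1 := (abs_le.mp (hdesc δs hδsb)).1
      have h2 := le_csSup hbdd hmem
      rw [hδsinner] at h1
      linarith
    have hupS : sSup S ≤ L x + ε * S1 + K := csSup_le hne hup
    rw [abs_le]
    constructor <;> linarith
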